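/- arXiv:1501.04826 — 3 statements merged into one kernel-verified Lean document; each statement's English description precedes it below -/
import Mathlib

section
/- Let γ be a confidence parameter with 0 < γ < 1 and let X₀ → Y₀, X₁ → Y₁, …, X_k → Y_k be partial implications over [n] with k ≥ 1. If γ ≥ (k−1)/k, then the following are equivalent: (1) X₁ → Y₁, …, X_k → Y_k ⊨_γ X₀ → Y₀; (2) there exists L ⊆ [k] such that {X_i → Y_i : i ∈ L} ⊨_γ X₀ → Y₀ holds properly; (3) either Y₀ ⊆ X₀, or there exists a non-empty L ⊆ [k] such that (a) {X_i → Y_i : i ∈ L} enforces homogeneity, (b) ⋃_{i∈L} X_i ⊆ X₀ ⊆ ⋃_{i∈L} X_iY_i, and (c) Y₀ ⊆ X₀ ∪ ⋂_{i∈L} Y_i. -/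
open Finset

/-- Number of transactions in the dataset `D` that cover `X`, counted with multiplicity. -/
def cntD {n : ℕ} (D : Multiset (Finset (Fin n))) (X : Finset (Fin n)) : ℕ :=
  (D.filter (fun Z => X ⊆ Z)).card

/-- `D ⊨_γ X → Y` : either no transaction covers `X`, or the confidence of `X → Y` is ≥ γ. -/
def satPI {n : ℕ} (γ : ℝ) (D : Multiset (Finset (Fin n))) (X Y : Finset (Fin n)) : Prop :=
  cntD D X = 0 ∨ γ * (cntD D X : ℝ) ≤ (cntD D (X ∪ Y) : ℝ)

/-- Entailment at confidence threshold γ from the premises indexed by `L`. -/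
def entailsFrom {n k : ℕ} (γ : ℝ) (P : Fin k → Finset (Fin n) × Finset (Fin n))
    (L : Finset (Fin k)) (X₀ Y₀ : Finset (Fin n)) : Prop :=
  ∀ D : Multiset (Finset (Fin n)),
    (∀ i ∈ L, satPI γ D (P i).1 (P i).2) → satPI γ D X₀ Y₀

/-- Proper entailment from the premises indexed by `L`: the entailment holds,
and it fails from every proper subset of the premises. -/
def properFrom {n k : ℕ} (γ : ℝ) (P : Fin k → Finset (Fin n) × Finset (Fin n))
    (L : Finset (Fin k)) (X₀ Y₀ : Finset (Fin n)) : Prop :=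
  entailsFrom γ P L X₀ Y₀ ∧ ∀ L' ⊂ L, ¬ entailsFrom γ P L' X₀ Y₀

/-- The weight `w_Z(X → Y)`: `1-γ` if `Z` witnesses, `-γ` if `Z` violates, `0` otherwise. -/
noncomputable def wt {n : ℕ} (γ : ℝ) (Z X Y : Finset (Fin n)) : ℝ :=
  if X ∪ Y ⊆ Z then 1 - γ else if X ⊆ Z then -γ else 0

/-- The premises indexed by `L` enforce homogeneity. -/
def homogFrom {n k : ℕ} (P : Fin k → Finset (Fin n) × Finset (Fin n))
    (L : Finset (Fin k)) : Prop :=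
  ∀ Z : Finset (Fin n),
    (∀ i ∈ L, ¬ (P i).1 ⊆ Z ∨ (P i).1 ∪ (P i).2 ⊆ Z) →
    ((∀ i ∈ L, ¬ (P i).1 ⊆ Z) ∨ (∀ i ∈ L, (P i).1 ∪ (P i).2 ⊆ Z))

/-- The critical threshold `γ*({Xᵢ → Yᵢ : i ∈ L}, X)`. -/
noncomputable def gammaStar {n k : ℕ} (P : Fin k → Finset (Fin n) × Finset (Fin n))
    (L : Finset (Fin k)) (X : Finset (Fin n)) : ℝ :=
  sInf { r : ℝ | ∃ lam : Fin k → ℝ, (∀ i ∈ L, 0 ≤ lam i) ∧ (∑ i ∈ L, lam i) = 1 ∧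
    r = (Finset.univ.filter (fun Z : Finset (Fin n) => ¬ X ⊆ Z)).fold max 0
          (fun Z => (∑ i ∈ L.filter (fun i => (P i).1 ∪ (P i).2 ⊆ Z), lam i) /
                    (∑ i ∈ L.filter (fun i => (P i).1 ⊆ Z), lam i)) }

section Aux

variable {n k : ℕ}

lemma wt_eq (γ : ℝ) (Z X Y : Finset (Fin n)) :
    wt γ Z X Y = (if X ∪ Y ⊆ Z then (1:ℝ) else 0) - γ * (if X ⊆ Z then (1:ℝ) else 0) := by
  unfold wt
  by_cases h1 : X ∪ Y ⊆ Z
  · have h2 : X ⊆ Z := subset_union_left.trans h1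
    simp [h1, h2]
  · by_cases h2 : X ⊆ Z <;> simp [h1, h2]

lemma cnt_cast (D : Multiset (Finset (Fin n))) (X : Finset (Fin n)) :
    ((cntD D X : ℝ)) = (D.map fun Z => if X ⊆ Z then (1:ℝ) else 0).sum := by
  induction D using Multiset.induction_on with
  | empty => simp [cntD]
  | cons a D ih =>
    rw [Multiset.map_cons, Multiset.sum_cons, ← ih]
    unfold cntD
    rw [Multiset.filter_cons]
    by_cases h : X ⊆ a <;> simp [h, add_comm]

lemma sum_wt (γ : ℝ) (D : Multiset (Finset (Fin n))) (X Y : Finset (Fin n)) :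
    (D.map fun Z => wt γ Z X Y).sum = (cntD D (X ∪ Y) : ℝ) - γ * (cntD D X : ℝ) := by
  rw [cnt_cast, cnt_cast, ← Multiset.sum_map_mul_left]
  have : ∀ Z : Finset (Fin n), wt γ Z X Y
      = (if X ∪ Y ⊆ Z then (1:ℝ) else 0) + (-(γ * (if X ⊆ Z then (1:ℝ) else 0))) := by
    intro Z; rw [wt_eq]; ring
  rw [Multiset.map_congr rfl (fun Z _ => this Z), Multiset.sum_map_add]
  have h2 : (Multiset.map (fun Z => -(γ * if X ⊆ Z then (1:ℝ) else 0)) D).sum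
      = - (Multiset.map (fun Z => γ * if X ⊆ Z then (1:ℝ) else 0) D).sum := by
    induction D using Multiset.induction_on with
    | empty => simp
    | cons a D ih => simp [ih]; ring
  rw [h2]; ring

lemma satPI_iff {γ : ℝ} (D : Multiset (Finset (Fin n))) (X Y : Finset (Fin n)) :
    satPI γ D X Y ↔ 0 ≤ (D.map fun Z => wt γ Z X Y).sum := by
  rw [sum_wt, sub_nonneg]
  constructor
  · rintro (h | h)
    · rw [h]; push_cast; simp
    · exact h
  · exact Or.inr

lemma map_sum_comm {α : Type*} (D : Multiset α) (s : Finset (Fin k)) (g : Fin k → α → ℝ) :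
    (D.map fun Z => ∑ i ∈ s, g i Z).sum = ∑ i ∈ s, (D.map (g i)).sum := by
  induction D using Multiset.induction_on with
  | empty => simp
  | cons a D ih => simp [ih, Finset.sum_add_distrib]

/-- A pointwise dual certificate for the entailment. -/
def Cert {n k : ℕ} (γ : ℝ) (P : Fin k → Finset (Fin n) × Finset (Fin n))
    (X₀ Y₀ : Finset (Fin n)) : Prop :=
  ∃ lam : Fin k → ℝ, (∀ i, 0 ≤ lam i) ∧
    ∀ Z : Finset (Fin n), ∑ i, lam i * wt γ Z (P i).1 (P i).2 ≤ wt γ Z X₀ Y₀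

variable {γ : ℝ} {P : Fin k → Finset (Fin n) × Finset (Fin n)} {X₀ Y₀ : Finset (Fin n)}

lemma entails_of_cert (hC : Cert γ P X₀ Y₀) : entailsFrom γ P Finset.univ X₀ Y₀ := by
  obtain ⟨lam, h0, hpt⟩ := hC
  intro D hD
  rw [satPI_iff]
  have h1 : 0 ≤ ∑ i, lam i * (D.map fun Z => wt γ Z (P i).1 (P i).2).sum :=
    Finset.sum_nonneg fun i _ => mul_nonneg (h0 i)
      ((satPI_iff D (P i).1 (P i).2).mp (hD i (mem_univ i)))
  have h2 : ∑ i, lam i * (D.map fun Z => wt γ Z (P i).1 (P i).2).sum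
      = (D.map fun Z => ∑ i, lam i * wt γ Z (P i).1 (P i).2).sum := by
    rw [map_sum_comm]
    exact Finset.sum_congr rfl fun i _ => (Multiset.sum_map_mul_left ..).symm
  have h3 : (D.map fun Z => ∑ i, lam i * wt γ Z (P i).1 (P i).2).sum
      ≤ (D.map fun Z => wt γ Z X₀ Y₀).sum :=
    Multiset.sum_map_le_sum_map _ _ fun Z _ => hpt Z
  linarith [h1, h2 ▸ h1]

lemma entails_mono {L L' : Finset (Fin k)} (hsub : L' ⊆ L) (h : entailsFrom γ P L' X₀ Y₀) :
    entailsFrom γ P L X₀ Y₀ := fun D hD => h D (fun i hi => hD i (hsub hi))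

lemma exists_proper :
    ∀ L : Finset (Fin k), entailsFrom γ P L X₀ Y₀ →
      ∃ L', properFrom γ P L' X₀ Y₀ := by
  intro L
  induction L using Finset.strongInduction with
  | _ L ih =>
    intro hE
    by_cases h : ∃ L' ⊂ L, entailsFrom γ P L' X₀ Y₀
    · obtain ⟨L', hsub, hE'⟩ := h
      exact ih L' hsub hE'
    · push_neg at h
      exact ⟨L, hE, fun L' hL' => h L' hL'⟩

lemma wt_le_one_sub (hγ1 : γ < 1) (Z X Y : Finset (Fin n)) : wt γ Z X Y ≤ 1 - γ := by
  rw [wt]; split_ifs <;> linarith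

lemma wt_ge_neg (hγ0 : 0 < γ) (Z X Y : Finset (Fin n)) : -γ ≤ wt γ Z X Y := by
  rw [wt]; split_ifs <;> linarith

lemma cert_of_cond (hγ0 : 0 < γ) (hγ1 : γ < 1) (hk : 1 ≤ k)
    (hγk : ((k : ℝ) - 1) / (k : ℝ) ≤ γ)
    (h : Y₀ ⊆ X₀ ∨ ∃ L : Finset (Fin k), L.Nonempty ∧
        homogFrom P L ∧
        (L.biUnion (fun i => (P i).1) ⊆ X₀ ∧
         X₀ ⊆ L.biUnion (fun i => (P i).1 ∪ (P i).2)) ∧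
        Y₀ ⊆ X₀ ∪ L.inf (fun i => (P i).2)) :
    Cert γ P X₀ Y₀ := by
  have hγk' : (k : ℝ) - 1 ≤ γ * k := by
    rw [div_le_iff₀ (by exact_mod_cast Nat.pos_of_ne_zero (by omega))] at hγk
    linarith [hγk]
  rcases h with h | ⟨L, hLne, hhom, ⟨hb1, hb2⟩, hc⟩
  · refine ⟨0, fun i => le_refl 0, fun Z => ?_⟩
    simp only [Pi.zero_apply, zero_mul, Finset.sum_const_zero]
    have hXY : X₀ ∪ Y₀ = X₀ := union_eq_left.mpr h
    rw [wt, hXY]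
    by_cases h1 : X₀ ⊆ Z <;> simp [h1] <;> linarith
  · have hℓpos : (0:ℝ) < (L.card : ℝ) := by exact_mod_cast Finset.card_pos.mpr hLne
    refine ⟨fun i => if i ∈ L then (L.card : ℝ)⁻¹ else 0,
      fun i => by dsimp only; split_ifs <;> positivity, fun Z => ?_⟩
    have hsum : ∑ i, (if i ∈ L then (L.card : ℝ)⁻¹ else 0) * wt γ Z (P i).1 (P i).2
        = (L.card : ℝ)⁻¹ * ∑ i ∈ L, wt γ Z (P i).1 (P i).2 := by
      rw [Finset.mul_sum]
      rw [show ∀ (f : Fin k → ℝ), (∑ i ∈ L, (L.card : ℝ)⁻¹ * f i)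
            = ∑ i ∈ Finset.univ ∩ L, (L.card : ℝ)⁻¹ * f i from
          fun f => by rw [Finset.univ_inter]]
      rw [← Finset.sum_ite_mem]
      exact Finset.sum_congr rfl fun i _ => by split_ifs <;> simp
    rw [hsum]
    by_cases h1 : X₀ ∪ Y₀ ⊆ Z
    · have hR : wt γ Z X₀ Y₀ = 1 - γ := by rw [wt, if_pos h1]
      rw [hR]
      have hle : ∑ i ∈ L, wt γ Z (P i).1 (P i).2 ≤ (L.card : ℝ) * (1 - γ) := by
        calc ∑ i ∈ L, wt γ Z (P i).1 (P i).2 ≤ ∑ _i ∈ L, (1 - γ) :=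
              Finset.sum_le_sum fun i _ => wt_le_one_sub hγ1 _ _ _
          _ = (L.card : ℝ) * (1 - γ) := by rw [Finset.sum_const, nsmul_eq_mul]
      calc (L.card : ℝ)⁻¹ * ∑ i ∈ L, wt γ Z (P i).1 (P i).2
          ≤ (L.card : ℝ)⁻¹ * ((L.card : ℝ) * (1 - γ)) :=
            mul_le_mul_of_nonneg_left hle (by positivity)
        _ = 1 - γ := by field_simp
    · by_cases h2 : X₀ ⊆ Z
      · have hR : wt γ Z X₀ Y₀ = -γ := by rw [wt, if_neg h1, if_pos h2]
        rw [hR]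
        obtain ⟨b, hbY, hbZ⟩ : ∃ b ∈ Y₀, b ∉ Z := by
          by_contra hcon; push_neg at hcon
          exact h1 (union_subset h2 hcon)
        have hbX : b ∉ X₀ := fun hb => hbZ (h2 hb)
        have hbYi : ∀ i ∈ L, b ∈ (P i).2 := by
          have hmem : b ∈ X₀ ∪ L.inf (fun i => (P i).2) := hc hbY
          rcases mem_union.mp hmem with hmem | hmem
          · exact absurd hmem hbX
          · exact fun i hi => Finset.mem_inf.mp hmem i hi
        have hwi : ∀ i ∈ L, wt γ Z (P i).1 (P i).2 = -γ := by
          intro i hi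
          have hXi : (P i).1 ⊆ Z :=
            subset_trans (subset_trans (subset_biUnion_of_mem (fun i => (P i).1) hi) hb1) h2
          have hXYi : ¬ ((P i).1 ∪ (P i).2 ⊆ Z) := fun hs =>
            hbZ (hs (mem_union_right _ (hbYi i hi)))
          rw [wt, if_neg hXYi, if_pos hXi]
        rw [Finset.sum_congr rfl hwi, Finset.sum_const, nsmul_eq_mul]
        rw [← mul_assoc, inv_mul_cancel₀ (ne_of_gt hℓpos), one_mul]
      · have hR : wt γ Z X₀ Y₀ = 0 := by
          rw [wt, if_neg h1, if_neg h2]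
        rw [hR]
        classical
        set S := L.filter (fun i => (P i).1 ∪ (P i).2 ⊆ Z) with hS
        set T := L.filter (fun i => ¬ ((P i).1 ∪ (P i).2 ⊆ Z) ∧ (P i).1 ⊆ Z) with hT
        have hsplit : ∑ i ∈ L, wt γ Z (P i).1 (P i).2
            = (S.card : ℝ) * (1 - γ) + (T.card : ℝ) * (-γ) := by
          rw [← Finset.sum_filter_add_sum_filter_not L (fun i => (P i).1 ∪ (P i).2 ⊆ Z)]
          congr 1
          · rw [Finset.sum_congr rfl (fun i hi => by
                rw [wt, if_pos (Finset.mem_filter.mp hi).2]), Finset.sum_const, nsmul_eq_mul]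
          · rw [← Finset.sum_filter_add_sum_filter_not
                (L.filter fun i => ¬ ((P i).1 ∪ (P i).2 ⊆ Z)) (fun i => (P i).1 ⊆ Z)]
            rw [Finset.filter_filter]
            have hz : ∑ i ∈ (L.filter fun i => ¬ ((P i).1 ∪ (P i).2 ⊆ Z)).filter
                (fun i => ¬ (P i).1 ⊆ Z), wt γ Z (P i).1 (P i).2 = 0 := by
              apply Finset.sum_eq_zero
              intro i hi
              obtain ⟨hi1, hi2⟩ := Finset.mem_filter.mp hi
              rw [wt, if_neg (Finset.mem_filter.mp hi1).2, if_neg hi2]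
            rw [hz, add_zero]
            rw [Finset.sum_congr rfl (fun i hi => by
                rw [wt, if_neg (Finset.mem_filter.mp hi).2.1,
                  if_pos (Finset.mem_filter.mp hi).2.2]), Finset.sum_const, nsmul_eq_mul]
        rcases Finset.eq_empty_or_nonempty T with hTe | hTne
        · have hgood : ∀ i ∈ L, ¬ (P i).1 ⊆ Z ∨ (P i).1 ∪ (P i).2 ⊆ Z := by
            intro i hi
            by_contra hcon; push_neg at hcon
            have : i ∈ T := Finset.mem_filter.mpr ⟨hi, hcon.2, hcon.1⟩
            simp [hTe] at this
          rcases hhom Z hgood with hall | hall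
          · have hSe : S = ∅ := by
              rw [Finset.eq_empty_iff_forall_notMem]
              intro i hi
              obtain ⟨hi1, hi2⟩ := Finset.mem_filter.mp hi
              exact hall i hi1 (subset_trans subset_union_left hi2)
            rw [hsplit, hSe, hTe]
            simp
          · exfalso
            exact h2 (subset_trans hb2 (biUnion_subset.mpr hall))
        · rw [hsplit]
          have hst : (S.card : ℝ) + (T.card : ℝ) ≤ (k : ℝ) := by
            have hdisj : Disjoint S T := by
              rw [Finset.disjoint_left]
              intro i hiS hiT
              exact (Finset.mem_filter.mp hiT).2.1 (Finset.mem_filter.mp hiS).2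
            have h4 : S.card + T.card ≤ k := by
              rw [← Finset.card_union_of_disjoint hdisj]
              calc (S ∪ T).card ≤ (Finset.univ : Finset (Fin k)).card :=
                    Finset.card_le_card (Finset.subset_univ _)
                _ = k := by simp
            exact_mod_cast h4
          have ht1 : (1:ℝ) ≤ (T.card : ℝ) := by
            have := Finset.card_pos.mpr hTne
            exact_mod_cast this
          have hs0 : (0:ℝ) ≤ (S.card : ℝ) := by positivity
          have hkey : (S.card : ℝ) * (1 - γ) + (T.card : ℝ) * (-γ) ≤ 0 := by
            have h5 : (0:ℝ) ≤ (1 - γ) * ((k : ℝ) - (S.card : ℝ) - (T.card : ℝ)) :=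
              mul_nonneg (by linarith) (by linarith)
            nlinarith [h5, hγk', ht1]
          have : (0:ℝ) ≤ (L.card : ℝ)⁻¹ := by positivity
          nlinarith [hkey, this]

lemma cond_of_cert (hγ0 : 0 < γ) (hγ1 : γ < 1) (hC : Cert γ P X₀ Y₀) :
    Y₀ ⊆ X₀ ∨ ∃ L : Finset (Fin k), L.Nonempty ∧
        homogFrom P L ∧
        (L.biUnion (fun i => (P i).1) ⊆ X₀ ∧
         X₀ ⊆ L.biUnion (fun i => (P i).1 ∪ (P i).2)) ∧
        Y₀ ⊆ X₀ ∪ L.inf (fun i => (P i).2) := by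
  classical
  by_cases hY : Y₀ ⊆ X₀
  · exact Or.inl hY
  right
  obtain ⟨lam, h0, hpt⟩ := hC
  have hwuniv : ∀ X Y : Finset (Fin n), wt γ (Finset.univ : Finset (Fin n)) X Y = 1 - γ := by
    intro X Y; rw [wt, if_pos (Finset.subset_univ _)]
  have hs1 : ∑ i, lam i ≤ 1 := by
    have h2 := hpt Finset.univ
    simp only [hwuniv] at h2
    rw [← Finset.sum_mul] at h2
    have h3 : (0:ℝ) < 1 - γ := by linarith
    nlinarith [h2]
  have hnXY : ¬ (X₀ ∪ Y₀ ⊆ X₀) := fun hs => hY (subset_trans subset_union_right hs)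
  have hseq : ∑ i, lam i = 1 := by
    have h2 := hpt X₀
    have hR : wt γ X₀ X₀ Y₀ = -γ := by rw [wt, if_neg hnXY, if_pos (Finset.Subset.refl _)]
    rw [hR] at h2
    have hlow : (-γ) * ∑ i, lam i ≤ ∑ i, lam i * wt γ X₀ (P i).1 (P i).2 := by
      rw [Finset.mul_sum]
      exact Finset.sum_le_sum fun i _ => by
        have := wt_ge_neg (n := n) hγ0 X₀ (P i).1 (P i).2
        nlinarith [h0 i]
    have : (-γ) * ∑ i, lam i ≤ -γ := le_trans hlow h2
    have hge : (1:ℝ) ≤ ∑ i, lam i := by nlinarith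
    linarith
  have key : ∀ Z : Finset (Fin n), X₀ ⊆ Z → ¬ (X₀ ∪ Y₀ ⊆ Z) →
      ∀ i, lam i ≠ 0 → ((P i).1 ⊆ Z ∧ ¬ ((P i).1 ∪ (P i).2 ⊆ Z)) := by
    intro Z hZ1 hZ2 i hi
    have h2 := hpt Z
    have hR : wt γ Z X₀ Y₀ = -γ := by rw [wt, if_neg hZ2, if_pos hZ1]
    rw [hR] at h2
    have hterm : ∀ j ∈ (Finset.univ : Finset (Fin k)),
        0 ≤ lam j * (wt γ Z (P j).1 (P j).2 + γ) := fun j _ =>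
      mul_nonneg (h0 j) (by linarith [wt_ge_neg (n := n) hγ0 Z (P j).1 (P j).2])
    have hexp : ∑ j, lam j * (wt γ Z (P j).1 (P j).2 + γ)
        = (∑ j, lam j * wt γ Z (P j).1 (P j).2) + γ * ∑ j, lam j := by
      rw [Finset.mul_sum, ← Finset.sum_add_distrib]
      exact Finset.sum_congr rfl fun j _ => by ring
    have hsum0 : ∑ j, lam j * (wt γ Z (P j).1 (P j).2 + γ) ≤ 0 := by
      rw [hexp, hseq]; linarith
    have hz := (Finset.sum_eq_zero_iff_of_nonneg hterm).mp
      (le_antisymm hsum0 (Finset.sum_nonneg hterm)) i (mem_univ i)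
    have hw : wt γ Z (P i).1 (P i).2 = -γ := by
      rcases mul_eq_zero.mp hz with h | h
      · exact absurd h hi
      · linarith
    rw [wt] at hw
    split_ifs at hw with ha hb
    · exact absurd hw (by intro h; linarith)
    · exact ⟨hb, ha⟩
    · exact absurd hw (by intro h; linarith)
  set L := Finset.univ.filter (fun i => lam i ≠ 0) with hL
  have hmemL : ∀ i, i ∈ L ↔ lam i ≠ 0 := fun i => by simp [hL]
  have hLne : L.Nonempty := by
    rw [Finset.nonempty_iff_ne_empty]
    intro he
    have : ∀ i, lam i = 0 := by
      intro i
      by_contra hne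
      have : i ∈ L := (hmemL i).mpr hne
      simp [he] at this
    have : ∑ i, lam i = 0 := Finset.sum_eq_zero fun i _ => this i
    rw [hseq] at this; norm_num at this
  have hkey0 := key X₀ (Finset.Subset.refl _) hnXY
  have hb1 : L.biUnion (fun i => (P i).1) ⊆ X₀ :=
    biUnion_subset.mpr fun i hi => (hkey0 i ((hmemL i).mp hi)).1
  have hb2 : X₀ ⊆ L.biUnion (fun i => (P i).1 ∪ (P i).2) := by
    by_contra hcon
    set Z := L.biUnion (fun i => (P i).1 ∪ (P i).2) with hZ
    have h2 := hpt Z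
    have hR : wt γ Z X₀ Y₀ = 0 := by
      rw [wt, if_neg (fun hs => hcon (subset_trans subset_union_left hs)), if_neg hcon]
    have hsum : ∑ i, lam i * wt γ Z (P i).1 (P i).2 = (1 - γ) * ∑ i, lam i := by
      rw [Finset.mul_sum]
      apply Finset.sum_congr rfl
      intro i _
      by_cases hi : lam i = 0
      · simp [hi]
      · have hXY : (P i).1 ∪ (P i).2 ⊆ Z :=
          subset_biUnion_of_mem (fun i => (P i).1 ∪ (P i).2) ((hmemL i).mpr hi)
        rw [wt, if_pos hXY]; ring
    rw [hsum, hseq, hR] at h2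
    linarith
  have hc : Y₀ ⊆ X₀ ∪ L.inf (fun i => (P i).2) := by
    intro b hb
    by_cases hbX : b ∈ X₀
    · exact mem_union_left _ hbX
    refine mem_union_right _ (Finset.mem_inf.mpr fun i hi => ?_)
    have hZ1 : X₀ ⊆ Finset.univ.erase b := fun x hx =>
      Finset.mem_erase.mpr ⟨fun he => hbX (he ▸ hx), mem_univ x⟩
    have hZ2 : ¬ (X₀ ∪ Y₀ ⊆ Finset.univ.erase b) := fun hs =>
      (Finset.mem_erase.mp (hs (mem_union_right _ hb))).1 rfl
    obtain ⟨hXi, hXYi⟩ := key _ hZ1 hZ2 i ((hmemL i).mp hi)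
    obtain ⟨x, hx1, hx2⟩ := Finset.not_subset.mp hXYi
    have hxb : x = b := by
      by_contra hne
      exact hx2 (Finset.mem_erase.mpr ⟨hne, mem_univ _⟩)
    subst hxb
    rcases mem_union.mp hx1 with hmem | hmem
    · exact absurd ((hkey0 i ((hmemL i).mp hi)).1 hmem) hbX
    · exact hmem
  have hhom : homogFrom P L := by
    intro Z hgood
    by_cases hall : ∀ i ∈ L, ¬ (P i).1 ⊆ Z
    · exact Or.inl hall
    · push_neg at hall
      obtain ⟨i₀, hi₀L, hi₀⟩ := hall
      right
      by_cases hZX : X₀ ⊆ Z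
      · intro j hjL
        rcases hgood j hjL with hmem | hmem
        · exact absurd (subset_trans (hkey0 j ((hmemL j).mp hjL)).1 hZX) hmem
        · exact hmem
      · exfalso
        have h2 := hpt Z
        have hR : wt γ Z X₀ Y₀ = 0 := by
          rw [wt, if_neg (fun hs => hZX (subset_trans subset_union_left hs)), if_neg hZX]
        have hterm : ∀ j ∈ (Finset.univ : Finset (Fin k)),
            0 ≤ lam j * wt γ Z (P j).1 (P j).2 := by
          intro j _
          by_cases hj : lam j = 0
          · simp [hj]
          rcases hgood j ((hmemL j).mpr hj) with hmem | hmem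
          · have hw : wt γ Z (P j).1 (P j).2 = 0 := by
              rw [wt, if_neg (fun hs => hmem (subset_trans subset_union_left hs)), if_neg hmem]
            simp [hw]
          · have hw : wt γ Z (P j).1 (P j).2 = 1 - γ := by rw [wt, if_pos hmem]
            rw [hw]; exact mul_nonneg (h0 j) (by linarith)
        have hXYi₀ : (P i₀).1 ∪ (P i₀).2 ⊆ Z := by
          rcases hgood i₀ hi₀L with hmem | hmem
          · exact absurd hi₀ hmem
          · exact hmem
        have hlow : lam i₀ * (1 - γ) ≤ ∑ j, lam j * wt γ Z (P j).1 (P j).2 := by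
          have hw : lam i₀ * wt γ Z (P i₀).1 (P i₀).2 = lam i₀ * (1 - γ) := by
            rw [wt, if_pos hXYi₀]
          exact hw ▸ Finset.single_le_sum hterm (mem_univ i₀)
        have hpos : 0 < lam i₀ := lt_of_le_of_ne (h0 i₀) (Ne.symm ((hmemL i₀).mp hi₀L))
        rw [hR] at h2
        nlinarith
  exact ⟨L, hLne, hhom, ⟨hb1, hb2⟩, hc⟩

lemma wt_abs_le (hγ0 : 0 < γ) (hγ1 : γ < 1) (Z X Y : Finset (Fin n)) : |wt γ Z X Y| ≤ 1 := by
  rw [wt]; split_ifs <;> rw [abs_le] <;> constructor <;> linarith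

set_option maxHeartbeats 1000000 in
lemma not_entails_of_sep (hγ0 : 0 < γ) (hγ1 : γ < 1)
    (y : Finset (Fin n) → ℝ) (hy : ∀ Z, 0 ≤ y Z)
    (hpos : ∀ i : Fin k, 0 ≤ ∑ Z, y Z * wt γ Z (P i).1 (P i).2)
    (hneg : ∑ Z, y Z * wt γ Z X₀ Y₀ < 0) :
    ¬ entailsFrom γ P Finset.univ X₀ Y₀ := by
  classical
  intro hE
  set S0 : ℝ := ∑ Z, y Z * wt γ Z X₀ Y₀ with hS0
  set δ : ℝ := (-S0) / (2 * (1 - γ)) with hδ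
  have hδpos : 0 < δ := div_pos (by linarith) (by linarith)
  have h1γ : (1:ℝ) - γ ≠ 0 := by linarith
  have hδγ : δ * (1 - γ) = -S0 / 2 := by
    rw [hδ]; field_simp
  set y' : Finset (Fin n) → ℝ := fun Z => y Z + (if Z = Finset.univ then δ else 0) with hy'def
  have hy' : ∀ Z, 0 ≤ y' Z := by
    intro Z
    show 0 ≤ y Z + (if Z = Finset.univ then δ else 0)
    split_ifs <;> linarith [hy Z]
  have hy'sum : ∀ X Y : Finset (Fin n),
      ∑ Z, y' Z * wt γ Z X Y = (∑ Z, y Z * wt γ Z X Y) + δ * (1 - γ) := by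
    intro X Y
    have hterm : ∀ Z : Finset (Fin n), y' Z * wt γ Z X Y
        = y Z * wt γ Z X Y + (if Z = Finset.univ then δ * wt γ Z X Y else 0) := by
      intro Z
      show (y Z + (if Z = Finset.univ then δ else 0)) * wt γ Z X Y
        = y Z * wt γ Z X Y + (if Z = Finset.univ then δ * wt γ Z X Y else 0)
      by_cases h : Z = Finset.univ
      · rw [if_pos h, if_pos h]; ring
      · rw [if_neg h, if_neg h]; ring
    rw [Finset.sum_congr rfl fun Z _ => hterm Z, Finset.sum_add_distrib]
    congr 1
    rw [Finset.sum_ite_eq' Finset.univ Finset.univ (fun Z => δ * wt γ Z X Y)]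
    rw [if_pos (mem_univ _), wt, if_pos (Finset.subset_univ _)]
  set N : ℝ := (Fintype.card (Finset (Fin n)) : ℝ) with hN
  have hN0 : 0 ≤ N := Nat.cast_nonneg _
  set ε : ℝ := min (δ * (1 - γ)) ((-S0) / 2) / (N + 1) with hε
  have hεpos : 0 < ε := div_pos (lt_min (by nlinarith) (by linarith)) (by linarith)
  have hεN : ε * N < min (δ * (1 - γ)) ((-S0) / 2) := by
    rw [hε]
    rw [div_mul_eq_mul_div, div_lt_iff₀ (by linarith)]
    have hmin : 0 < min (δ * (1 - γ)) ((-S0) / 2) := lt_min (by nlinarith) (by linarith)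
    nlinarith
  obtain ⟨Dd, hDd⟩ := exists_nat_gt (1 / ε)
  have hDdpos : (0:ℝ) < (Dd : ℝ) := lt_trans (by positivity) hDd
  set m : Finset (Fin n) → ℕ := fun Z => ⌈y' Z * Dd⌉₊ with hm
  set q : Finset (Fin n) → ℝ := fun Z => (m Z : ℝ) / Dd with hq
  have hq1 : ∀ Z, y' Z ≤ q Z := fun Z => (le_div_iff₀ hDdpos).mpr (Nat.le_ceil _)
  have hq2 : ∀ Z, q Z < y' Z + ε := by
    intro Z
    have h1 : (m Z : ℝ) < y' Z * Dd + 1 :=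
      Nat.ceil_lt_add_one (mul_nonneg (hy' Z) (le_of_lt hDdpos))
    have h3 : 1 / (Dd:ℝ) < ε := by
      rw [div_lt_iff₀ hDdpos]
      have h4 := (div_lt_iff₀ hεpos).mp hDd
      linarith
    have h2 : q Z < y' Z + 1 / Dd := by
      rw [hq]
      rw [div_lt_iff₀ hDdpos]
      have h5 : (y' Z + 1 / (Dd:ℝ)) * Dd = y' Z * Dd + 1 := by field_simp
      rw [h5]
      exact h1
    exact h2.trans (add_lt_add_right h3 (y' Z))
  have happrox : ∀ X Y : Finset (Fin n),
      |∑ Z, q Z * wt γ Z X Y - ∑ Z, y' Z * wt γ Z X Y| ≤ ε * N := by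
    intro X Y
    rw [← Finset.sum_sub_distrib]
    have hcong : ∀ Z ∈ (Finset.univ : Finset (Finset (Fin n))),
        q Z * wt γ Z X Y - y' Z * wt γ Z X Y = (q Z - y' Z) * wt γ Z X Y :=
      fun Z _ => by ring
    rw [Finset.sum_congr rfl hcong]
    calc |∑ Z, (q Z - y' Z) * wt γ Z X Y| ≤ ∑ Z, |(q Z - y' Z) * wt γ Z X Y| :=
          Finset.abs_sum_le_sum_abs _ _
      _ ≤ ∑ _Z : Finset (Fin n), ε * 1 := Finset.sum_le_sum fun Z _ => by
          rw [abs_mul]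
          exact mul_le_mul (by rw [abs_of_nonneg (by linarith [hq1 Z])]; linarith [hq2 Z])
            (wt_abs_le hγ0 hγ1 _ _ _) (abs_nonneg _) (le_of_lt hεpos)
      _ = ε * N := by
          rw [Finset.sum_const, nsmul_eq_mul, mul_one, hN, ← Finset.card_univ, mul_comm]
  set D : Multiset (Finset (Fin n)) := ∑ Z : Finset (Fin n), Multiset.replicate (m Z) Z with hD
  have hDsum : ∀ f : Finset (Fin n) → ℝ, (D.map f).sum = ∑ Z, (m Z : ℝ) * f Z := by
    intro f
    rw [hD]
    have : ∀ s : Finset (Finset (Fin n)),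
        ((∑ Z ∈ s, Multiset.replicate (m Z) Z).map f).sum = ∑ Z ∈ s, (m Z : ℝ) * f Z := by
      intro s
      induction s using Finset.cons_induction with
      | empty => simp
      | cons a s ha ih =>
        rw [Finset.sum_cons, Multiset.map_add, Multiset.sum_add, ih, Finset.sum_cons,
          Multiset.map_replicate, Multiset.sum_replicate, nsmul_eq_mul]
    exact this Finset.univ
  have hqm : ∀ f : Finset (Fin n) → ℝ, ∑ Z, (m Z : ℝ) * f Z = Dd * ∑ Z, q Z * f Z := by
    intro f
    rw [Finset.mul_sum]
    apply Finset.sum_congr rfl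
    intro Z _
    rw [hq]; field_simp
  have hsat : ∀ i ∈ (Finset.univ : Finset (Fin k)), satPI γ D (P i).1 (P i).2 := by
    intro i _
    rw [satPI_iff, hDsum, hqm]
    have h1 := happrox (P i).1 (P i).2
    have h2 := hy'sum (P i).1 (P i).2
    have h3 := hpos i
    have h4 := (abs_le.mp h1).1
    have h5 : 0 ≤ ∑ Z, q Z * wt γ Z (P i).1 (P i).2 := by
      have h6 := min_le_left (δ * (1 - γ)) ((-S0) / 2)
      linarith [hεN]
    exact mul_nonneg (le_of_lt hDdpos) h5
  have hviol : ¬ satPI γ D X₀ Y₀ := by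
    rw [satPI_iff, hDsum, hqm]
    have h1 := happrox X₀ Y₀
    have h2 := hy'sum X₀ Y₀
    have h4 := (abs_le.mp h1).2
    have h6 := min_le_right (δ * (1 - γ)) ((-S0) / 2)
    have h5 : ∑ Z, q Z * wt γ Z X₀ Y₀ < 0 := by
      rw [← hS0] at h2
      rw [hδγ] at h2
      linarith [hεN]
    intro hcon
    have h7 : (Dd:ℝ) * ∑ Z, q Z * wt γ Z X₀ Y₀ < 0 :=
      mul_neg_of_pos_of_neg hDdpos h5
    linarith
  exact hviol (hE D hsat)

set_option maxHeartbeats 1000000 in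
lemma certSet_closed (hγ1 : γ < 1) :
    IsClosed {v : Finset (Fin n) → ℝ | ∃ lam : Fin k → ℝ, (∀ i, 0 ≤ lam i) ∧
      ∀ Z, ∑ i, lam i * wt γ Z (P i).1 (P i).2 ≤ v Z} := by
  apply IsSeqClosed.isClosed
  intro v p hv hvp
  have hcoord : ∀ Z : Finset (Fin n),
      Filter.Tendsto (fun m => v m Z) Filter.atTop (nhds (p Z)) :=
    fun Z => tendsto_pi_nhds.mp hvp Z
  choose lam hlam0 hlamle using hv
  have hwuniv : ∀ i : Fin k, wt γ (Finset.univ : Finset (Fin n)) (P i).1 (P i).2 = 1 - γ :=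
    fun i => by rw [wt, if_pos (Finset.subset_univ _)]
  have hsb : ∀ m, (∑ i, lam m i) * (1 - γ) ≤ v m Finset.univ := by
    intro m
    have h1 := hlamle m Finset.univ
    calc (∑ i, lam m i) * (1 - γ) = ∑ i, lam m i * wt γ Finset.univ (P i).1 (P i).2 := by
          rw [Finset.sum_mul]
          exact Finset.sum_congr rfl fun i _ => by rw [hwuniv]
      _ ≤ v m Finset.univ := h1
  obtain ⟨Nb, hNb⟩ : ∃ Nb : ℕ, ∀ m ≥ Nb, v m Finset.univ ≤ p Finset.univ + 1 := by
    have h2 : ∀ᶠ m in Filter.atTop, v m Finset.univ < p Finset.univ + 1 :=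
      (hcoord Finset.univ).eventually_lt_const (lt_add_one _)
    obtain ⟨Nb, hNb⟩ := Filter.eventually_atTop.mp h2
    exact ⟨Nb, fun m hm => le_of_lt (hNb m hm)⟩
  set M : ℝ := max 0 ((p Finset.univ + 1) / (1 - γ)) with hM
  have hbox : ∀ m : ℕ, (fun i => lam (Nb + m) i) ∈
      Set.pi Set.univ (fun _ : Fin k => Set.Icc (0:ℝ) M) := by
    intro m i _
    refine ⟨hlam0 _ i, ?_⟩
    have h1 : lam (Nb + m) i ≤ ∑ j, lam (Nb + m) j :=
      Finset.single_le_sum (fun j _ => hlam0 _ j) (mem_univ i)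
    have h2 := hsb (Nb + m)
    have h3 := hNb (Nb + m) (Nat.le_add_right _ _)
    have h4 : (∑ j, lam (Nb + m) j) ≤ (p Finset.univ + 1) / (1 - γ) := by
      rw [le_div_iff₀ (by linarith : (0:ℝ) < 1 - γ)]
      linarith
    exact le_trans h1 (le_trans h4 (le_max_right _ _))
  have hcpt : IsCompact (Set.pi Set.univ fun _ : Fin k => Set.Icc (0:ℝ) M) :=
    isCompact_univ_pi fun _ => isCompact_Icc
  obtain ⟨ls, hlsmem, φ, hφ, hφt⟩ := hcpt.tendsto_subseq hbox
  refine ⟨ls, fun i => (hlsmem i (Set.mem_univ i)).1, fun Z => ?_⟩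
  have hL : Filter.Tendsto (fun m => ∑ i, lam (Nb + φ m) i * wt γ Z (P i).1 (P i).2)
      Filter.atTop (nhds (∑ i, ls i * wt γ Z (P i).1 (P i).2)) := by
    apply tendsto_finset_sum
    intro i _
    exact (tendsto_pi_nhds.mp hφt i).mul_const _
  have hmono : Filter.Tendsto (fun m => Nb + φ m) Filter.atTop Filter.atTop :=
    Filter.tendsto_atTop_mono (fun m => Nat.le_add_left _ _) hφ.tendsto_atTop
  have hR : Filter.Tendsto (fun m => v (Nb + φ m) Z) Filter.atTop (nhds (p Z)) :=
    (hcoord Z).comp hmono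
  exact le_of_tendsto_of_tendsto' hL hR fun m => hlamle (Nb + φ m) Z

set_option maxHeartbeats 1000000 in
lemma cert_of_entails (hγ0 : 0 < γ) (hγ1 : γ < 1)
    (hE : entailsFrom γ P Finset.univ X₀ Y₀) : Cert γ P X₀ Y₀ := by
  classical
  by_contra hC
  set A : Set (Finset (Fin n) → ℝ) := {v | ∃ lam : Fin k → ℝ, (∀ i, 0 ≤ lam i) ∧
    ∀ Z, ∑ i, lam i * wt γ Z (P i).1 (P i).2 ≤ v Z} with hA
  have hmem0 : ∀ v : Finset (Fin n) → ℝ, (∀ Z, 0 ≤ v Z) → v ∈ A := by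
    intro v hv
    exact ⟨0, fun i => le_refl 0, fun Z => by simpa using hv Z⟩
  have hmemw : ∀ i₀ : Fin k, (fun Z => wt γ Z (P i₀).1 (P i₀).2) ∈ A := by
    intro i₀
    refine ⟨fun i => if i = i₀ then 1 else 0, fun i => by dsimp only; split_ifs <;> norm_num,
      fun Z => ?_⟩
    have h1 : ∑ i, (if i = i₀ then (1:ℝ) else 0) * wt γ Z (P i).1 (P i).2
        = wt γ Z (P i₀).1 (P i₀).2 := by
      rw [Finset.sum_eq_single i₀]
      · simp
      · intro j _ hj; simp [hj]
      · intro h; exact absurd (mem_univ i₀) h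
    rw [h1]
  have hconv : Convex ℝ A := by
    rintro v₁ ⟨l1, hl1, hle1⟩ v₂ ⟨l2, hl2, hle2⟩ a b ha hb hab
    refine ⟨fun i => a * l1 i + b * l2 i,
      fun i => add_nonneg (mul_nonneg ha (hl1 i)) (mul_nonneg hb (hl2 i)), fun Z => ?_⟩
    have h1 : ∑ i, (a * l1 i + b * l2 i) * wt γ Z (P i).1 (P i).2
        = a * ∑ i, l1 i * wt γ Z (P i).1 (P i).2 + b * ∑ i, l2 i * wt γ Z (P i).1 (P i).2 := by
      rw [Finset.mul_sum, Finset.mul_sum, ← Finset.sum_add_distrib]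
      exact Finset.sum_congr rfl fun i _ => by ring
    rw [h1]
    have h2 : (a • v₁ + b • v₂) Z = a * v₁ Z + b * v₂ Z := rfl
    rw [h2]
    exact add_le_add (mul_le_mul_of_nonneg_left (hle1 Z) ha)
      (mul_le_mul_of_nonneg_left (hle2 Z) hb)
  have hsmul : ∀ (t : ℝ) (v : Finset (Fin n) → ℝ), 0 ≤ t → v ∈ A → t • v ∈ A := by
    rintro t v ht ⟨l, hl, hle⟩
    refine ⟨fun i => t * l i, fun i => mul_nonneg ht (hl i), fun Z => ?_⟩
    have h1 : ∑ i, (t * l i) * wt γ Z (P i).1 (P i).2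
        = t * ∑ i, l i * wt γ Z (P i).1 (P i).2 := by
      rw [Finset.mul_sum]; exact Finset.sum_congr rfl fun i _ => by ring
    rw [h1]
    have h2 : (t • v) Z = t * v Z := rfl
    rw [h2]
    exact mul_le_mul_of_nonneg_left (hle Z) ht
  have hclosed : IsClosed A := certSet_closed hγ1
  have hw0 : (fun Z => wt γ Z X₀ Y₀) ∉ A := fun hmem => hC hmem
  obtain ⟨f, u, hfA, hfw0⟩ := geometric_hahn_banach_closed_point hconv hclosed hw0
  have hu0 : 0 < u := by
    have h1 := hfA 0 (hmem0 0 fun Z => le_refl 0)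
    simpa using h1
  have hfle : ∀ v ∈ A, f v ≤ 0 := by
    intro v hv
    by_contra h
    push_neg at h
    have ht : 0 < (u + 1) / f v := div_pos (by linarith) h
    have h2 := hfA _ (hsmul _ v (le_of_lt ht) hv)
    rw [map_smul, smul_eq_mul, div_mul_cancel₀ _ (ne_of_gt h)] at h2
    linarith
  have hrep : ∀ v : Finset (Fin n) → ℝ, f v = ∑ Z, v Z * f (Pi.single Z 1) := by
    intro v
    conv_lhs => rw [← Finset.univ_sum_single v]
    rw [map_sum]
    apply Finset.sum_congr rfl
    intro Z _
    have h1 : (Pi.single Z (v Z) : Finset (Fin n) → ℝ)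
        = v Z • (Pi.single Z (1:ℝ) : Finset (Fin n) → ℝ) := by
      ext W
      by_cases h : W = Z
      · subst h; simp
      · simp [Pi.single_apply, h]
    rw [h1, map_smul, smul_eq_mul]
  set y : Finset (Fin n) → ℝ := fun Z => - f (Pi.single Z 1) with hy
  have hynn : ∀ Z, 0 ≤ y Z := by
    intro Z
    have h1 : (Pi.single Z (1:ℝ) : Finset (Fin n) → ℝ) ∈ A := by
      apply hmem0
      intro W
      by_cases h : W = Z
      · subst h; simp
      · simp [Pi.single_apply, h]
    have h2 := hfle _ h1
    show 0 ≤ - f (Pi.single Z 1)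
    linarith
  have hyrep : ∀ v : Finset (Fin n) → ℝ, ∑ Z, y Z * v Z = - f v := by
    intro v
    rw [hrep v, ← Finset.sum_neg_distrib]
    exact Finset.sum_congr rfl fun Z _ => by
      show y Z * v Z = -(v Z * f (Pi.single Z 1))
      rw [hy]; ring
  have hpos : ∀ i : Fin k, 0 ≤ ∑ Z, y Z * wt γ Z (P i).1 (P i).2 := by
    intro i
    rw [hyrep]
    have h1 := hfle _ (hmemw i)
    linarith
  have hneg : ∑ Z, y Z * wt γ Z X₀ Y₀ < 0 := by
    rw [hyrep]
    linarith
  exact not_entails_of_sep hγ0 hγ1 y hynn hpos hneg hE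

end Aux

theorem stmt14 {n k : ℕ} (γ : ℝ) (hγ0 : 0 < γ) (hγ1 : γ < 1) (hk : 1 ≤ k)
    (P : Fin k → Finset (Fin n) × Finset (Fin n)) (X₀ Y₀ : Finset (Fin n))
    (hγk : ((k : ℝ) - 1) / (k : ℝ) ≤ γ) :
    (entailsFrom γ P Finset.univ X₀ Y₀ ↔
      ∃ L : Finset (Fin k), properFrom γ P L X₀ Y₀) ∧
    (entailsFrom γ P Finset.univ X₀ Y₀ ↔
      (Y₀ ⊆ X₀ ∨ ∃ L : Finset (Fin k), L.Nonempty ∧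
        homogFrom P L ∧
        (L.biUnion (fun i => (P i).1) ⊆ X₀ ∧
         X₀ ⊆ L.biUnion (fun i => (P i).1 ∪ (P i).2)) ∧
        Y₀ ⊆ X₀ ∪ L.inf (fun i => (P i).2))) := by
  constructor
  · constructor
    · intro h
      exact exists_proper Finset.univ h
    · rintro ⟨L, hL⟩
      exact entails_mono (Finset.subset_univ L) hL.1
  · constructor
    · intro h
      exact cond_of_cert hγ0 hγ1 (cert_of_entails hγ0 hγ1 h)
    · intro h
      exact entails_of_cert (cert_of_cond hγ0 hγ1 hk hγk h)
end

section
/- A set of two partial implications X₁ → Y₁, X₂ → Y₂ over [n] enforces homogeneity if and only if both X₁ ⊆ X₂Y₂ and X₂ ⊆ X₁Y₁ hold. -/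
open Finset

theorem stmt15 {n : ℕ} (X₁ Y₁ X₂ Y₂ : Finset (Fin n)) :
    homogFrom (![(X₁, Y₁), (X₂, Y₂)]) Finset.univ ↔
      (X₁ ⊆ X₂ ∪ Y₂ ∧ X₂ ⊆ X₁ ∪ Y₁) := by
  constructor
  · intro h
    constructor
    · by_contra hns
      have := h (X₂ ∪ Y₂) ?_
      · rcases this with h1 | h2
        · exact h1 1 (mem_univ 1) subset_union_left
        · have := h2 0 (mem_univ 0)
          simp only [Matrix.cons_val_zero] at this
          exact hns (subset_union_left.trans this)
      · intro i _
        fin_cases i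
        · left; simpa using hns
        · right; simp
    · by_contra hns
      have := h (X₁ ∪ Y₁) ?_
      · rcases this with h1 | h2
        · exact h1 0 (mem_univ 0) subset_union_left
        · have := h2 1 (mem_univ 1)
          simp only [Matrix.cons_val_one, Matrix.head_cons] at this
          exact hns (subset_union_left.trans this)
      · intro i _
        fin_cases i
        · right; simp
        · left; simpa using hns
  · rintro ⟨h12, h21⟩ Z hZ
    have h1 := hZ 0 (mem_univ 0)
    have h2 := hZ 1 (mem_univ 1)
    simp only [Matrix.cons_val_zero, Matrix.cons_val_one, Matrix.head_cons] at h1 h2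
    rcases h1 with h1 | h1
    · rcases h2 with h2 | h2
      · left; intro i _
        fin_cases i <;> simpa
      · exact absurd (h12.trans h2) h1
    · right
      intro i _
      have hX2 : X₂ ⊆ Z := h21.trans h1
      have h2' : X₁ ∪ Y₁ ∪ (X₂ ∪ Y₂) ⊆ Z := by
        rcases h2 with h2 | h2
        · exact absurd hX2 h2
        · exact union_subset h1 h2
      fin_cases i <;> simp <;>
        first
          | exact h1
          | exact (subset_union_right.trans h2')
end

section
/- Let γ_c be the unique real number in (0,1) satisfying 1 − γ + (1−γ)²/γ + (1−γ)³/γ² = 1 (numerically γ_c ≈ 0.56984). Then, on the five-attribute set {A, B, C, D, H}, for every confidence parameter γ with 0 < γ < 1, the entailment {B} → {A,C,H}, {C} → {A,D}, {D} → {A,B} ⊨_γ {B,C,D,H} → {A} holds if and only if γ ≥ γ_c. -/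
open Finset

/- ### Auxiliary lemmas -/

lemma cntD_cons (Z : Finset (Fin 5)) (s : Multiset (Finset (Fin 5))) (X : Finset (Fin 5)) :
    cntD (Z ::ₘ s) X = cntD s X + (if X ⊆ Z then 1 else 0) := by
  simp only [cntD, Multiset.filter_cons]
  split_ifs <;> simp [add_comm]

lemma cntD_le {D : Multiset (Finset (Fin 5))} {X X' : Finset (Fin 5)} (h : X ⊆ X') :
    cntD D X' ≤ cntD D X := by
  apply Multiset.card_le_card
  apply Multiset.monotone_filter_right
  intro Z hZ
  exact h.trans hZ

set_option maxHeartbeats 2000000 in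
lemma key_ineq19 (γc γ : ℝ) (hc0 : 0 < γc) (hc1 : γc < 1)
    (hkey : 1 - 2*γc + γc^2 - γc^3 = 0)
    (hγ1 : γ < 1) (hγc : γc ≤ γ) (Z : Finset (Fin 5)) :
    γ^2 * ((if ({0,1,2,4} : Finset (Fin 5)) ⊆ Z then (1:ℝ) else 0) - γ * (if ({1} : Finset (Fin 5)) ⊆ Z then 1 else 0))
  + γ*(1-γ) * ((if ({0,2,3} : Finset (Fin 5)) ⊆ Z then (1:ℝ) else 0) - γ * (if ({2} : Finset (Fin 5)) ⊆ Z then 1 else 0))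
  + (1-γ)^2 * ((if ({0,1,3} : Finset (Fin 5)) ⊆ Z then (1:ℝ) else 0) - γ * (if ({3} : Finset (Fin 5)) ⊆ Z then 1 else 0))
  ≤ (γ^2 - γ + 1) * ((if ({0,1,2,3,4} : Finset (Fin 5)) ⊆ Z then (1:ℝ) else 0) - γ * (if ({1,2,3,4} : Finset (Fin 5)) ⊆ Z then 1 else 0)) := by
  have hγ0 : 0 < γ := lt_of_lt_of_le hc0 hγc
  have hf : 1 - 2*γ + γ^2 - γ^3 ≤ 0 := by
    nlinarith [mul_nonneg (sub_nonneg.2 hγc) (by nlinarith : (0:ℝ) ≤ 2 - γ - γc),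
      mul_nonneg (sub_nonneg.2 hγc) (by nlinarith : (0:ℝ) ≤ γ^2 + γ*γc + γc^2)]
  by_cases h0 : (0:Fin 5) ∈ Z <;> by_cases h1 : (1:Fin 5) ∈ Z <;>
    by_cases h2 : (2:Fin 5) ∈ Z <;> by_cases h3 : (3:Fin 5) ∈ Z <;>
    by_cases h4 : (4:Fin 5) ∈ Z <;>
    simp only [Finset.insert_subset_iff, Finset.singleton_subset_iff, h0, h1, h2, h3, h4,
      true_and, and_true, false_and, and_false, if_true, if_false, not_false_iff,
      eq_self_iff_true] <;>
    nlinarith [hf, mul_nonneg hγ0.le (sq_nonneg (1-γ)), sq_nonneg γ, sq_nonneg (1-γ), hγ0]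

lemma main_ineq19 (γc γ : ℝ) (hc0 : 0 < γc) (hc1 : γc < 1)
    (hkey : 1 - 2*γc + γc^2 - γc^3 = 0)
    (hγ1 : γ < 1) (hγc : γc ≤ γ) (D : Multiset (Finset (Fin 5))) :
    γ^2 * ((cntD D {0,1,2,4} : ℝ) - γ * cntD D {1})
  + γ*(1-γ) * ((cntD D {0,2,3} : ℝ) - γ * cntD D {2})
  + (1-γ)^2 * ((cntD D {0,1,3} : ℝ) - γ * cntD D {3})
  ≤ (γ^2 - γ + 1) * ((cntD D {0,1,2,3,4} : ℝ) - γ * cntD D {1,2,3,4}) := by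
  induction D using Multiset.induction_on with
  | empty => simp [cntD]
  | cons Z s ih =>
    have hk := key_ineq19 γc γ hc0 hc1 hkey hγ1 hγc Z
    simp only [cntD_cons]
    push_cast
    linarith [hk, ih]

lemma card_filter_replicate19 (p : Finset (Fin 5) → Prop) [DecidablePred p] (n : ℕ)
    (a : Finset (Fin 5)) :
    Multiset.card (Multiset.filter p (Multiset.replicate n a)) = if p a then n else 0 := by
  induction n with
  | zero => simp
  | succ n ih =>
    rw [Multiset.replicate_succ, Multiset.filter_cons]
    split_ifs with h <;> simp [h] at ih ⊢ <;> simpa using ih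

/-- Counterexample dataset for `γ < γc`. -/
def model19 (A B C : ℕ) : Multiset (Finset (Fin 5)) :=
  ({1,2,3,4} : Finset (Fin 5)) ::ₘ
    (Multiset.replicate A ({0,1,2,4} : Finset (Fin 5)) +
      (Multiset.replicate B ({0,2,3} : Finset (Fin 5)) +
        Multiset.replicate C ({0,1,2,3} : Finset (Fin 5))))

lemma cnt_model19 (A B C : ℕ) (X : Finset (Fin 5)) :
    cntD (model19 A B C) X =
      (if X ⊆ ({1,2,3,4} : Finset (Fin 5)) then 1 else 0)
      + (if X ⊆ ({0,1,2,4} : Finset (Fin 5)) then A else 0)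
      + (if X ⊆ ({0,2,3} : Finset (Fin 5)) then B else 0)
      + (if X ⊆ ({0,1,2,3} : Finset (Fin 5)) then C else 0) := by
  simp only [cntD, model19, Multiset.filter_cons, Multiset.filter_add,
    Multiset.card_add, apply_ite Multiset.card, card_filter_replicate19,
    Multiset.card_zero, Multiset.card_singleton]
  ring

set_option maxHeartbeats 2000000 in
theorem stmt19 (γc : ℝ) (hc0 : 0 < γc) (hc1 : γc < 1)
    (hceq : 1 - γc + (1 - γc) ^ 2 / γc + (1 - γc) ^ 3 / γc ^ 2 = 1)
    (γ : ℝ) (hγ0 : 0 < γ) (hγ1 : γ < 1) :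
    (∀ D : Multiset (Finset (Fin 5)),
        satPI γ D {1} {0, 2, 4} → satPI γ D {2} {0, 3} → satPI γ D {3} {0, 1} →
        satPI γ D {1, 2, 3, 4} {0}) ↔ γc ≤ γ := by
  have hcne : γc ≠ 0 := ne_of_gt hc0
  have hkey : 1 - 2*γc + γc^2 - γc^3 = 0 := by
    field_simp at hceq
    nlinarith [hceq]
  have u1 : ({1} : Finset (Fin 5)) ∪ {0,2,4} = {0,1,2,4} := by decide
  have u2 : ({2} : Finset (Fin 5)) ∪ {0,3} = {0,2,3} := by decide
  have u3 : ({3} : Finset (Fin 5)) ∪ {0,1} = {0,1,3} := by decide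
  have u0 : ({1,2,3,4} : Finset (Fin 5)) ∪ {0} = {0,1,2,3,4} := by decide
  constructor
  · -- entailment → γc ≤ γ : contrapositive, build counterexample
    intro hent
    by_contra hlt
    push_neg at hlt
    have hff : (0:ℝ) < 1 - 2*γ + γ^2 - γ^3 := by
      nlinarith [mul_pos (sub_pos.2 hlt) (show (0:ℝ) < 2 - γ - γc by nlinarith),
        mul_nonneg (sub_pos.2 hlt).le (show (0:ℝ) ≤ γ^2 + γ*γc + γc^2 by positivity)]
    have hffne : (1 - 2*γ + γ^2 - γ^3) ≠ 0 := ne_of_gt hff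
    -- the real-valued (doubled) solution of the tight system
    have hc2pos : (0:ℝ) < 1 - γ + γ^2 := by nlinarith [sq_nonneg (1-γ)]
    set a2 : ℝ := 2*γ / (1 - 2*γ + γ^2 - γ^3) with ha2def
    set b2 : ℝ := 2*γ^2 / (1 - 2*γ + γ^2 - γ^3) with hb2def
    set c2 : ℝ := 2*γ*(1 - γ + γ^2) / (1 - 2*γ + γ^2 - γ^3) with hc2def
    have ha2 : 0 ≤ a2 := by rw [ha2def]; positivity
    have hb2 : 0 ≤ b2 := by rw [hb2def]; positivity
    have hc2 : 0 ≤ c2 := by rw [hc2def]; positivity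
    have ia : (1-γ) * a2 = γ * (2 + c2) := by
      rw [ha2def, hc2def]; simp only [div_eq_mul_inv]; linear_combination (2*γ) * mul_inv_cancel₀ hffne
    have ic : (1-γ) * c2 = γ * (2 + b2) := by
      rw [hc2def, hb2def]; simp only [div_eq_mul_inv]; linear_combination (2*γ) * mul_inv_cancel₀ hffne
    have ibc : (1-γ) * (b2 + c2) = γ * (2 + a2) := by
      rw [ha2def, hb2def, hc2def]; simp only [div_eq_mul_inv]; linear_combination (2*γ) * mul_inv_cancel₀ hffne
    set A : ℕ := ⌈a2⌉₊ with hAdef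
    set B : ℕ := ⌈b2⌉₊ with hBdef
    set C : ℕ := ⌈c2⌉₊ with hCdef
    have hA1 : a2 ≤ (A:ℝ) := Nat.le_ceil _
    have hA2 : (A:ℝ) < a2 + 1 := by rw [hAdef]; exact Nat.ceil_lt_add_one ha2
    have hB1 : b2 ≤ (B:ℝ) := Nat.le_ceil _
    have hB2 : (B:ℝ) < b2 + 1 := by rw [hBdef]; exact Nat.ceil_lt_add_one hb2
    have hC1 : c2 ≤ (C:ℝ) := Nat.le_ceil _
    have hC2 : (C:ℝ) < c2 + 1 := by rw [hCdef]; exact Nat.ceil_lt_add_one hc2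
    -- counts in the model
    have cnt1 : cntD (model19 A B C) {1} = 1 + A + C := by
      rw [cnt_model19]
      norm_num [show (({1}:Finset (Fin 5)) ⊆ {1,2,3,4}) = True from by decide,
        show (({1}:Finset (Fin 5)) ⊆ {0,1,2,4}) = True from by decide,
        show (({1}:Finset (Fin 5)) ⊆ {0,2,3}) = False from by decide,
        show (({1}:Finset (Fin 5)) ⊆ {0,1,2,3}) = True from by decide]
    have cntw1 : cntD (model19 A B C) {0,1,2,4} = A := by
      rw [cnt_model19]
      norm_num [show (({0,1,2,4}:Finset (Fin 5)) ⊆ {1,2,3,4}) = False from by decide,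
        show (({0,1,2,4}:Finset (Fin 5)) ⊆ {0,1,2,4}) = True from by decide,
        show (({0,1,2,4}:Finset (Fin 5)) ⊆ {0,2,3}) = False from by decide,
        show (({0,1,2,4}:Finset (Fin 5)) ⊆ {0,1,2,3}) = False from by decide]
    have cnt2 : cntD (model19 A B C) {2} = 1 + A + B + C := by
      rw [cnt_model19]
      norm_num [show (({2}:Finset (Fin 5)) ⊆ {1,2,3,4}) = True from by decide,
        show (({2}:Finset (Fin 5)) ⊆ {0,1,2,4}) = True from by decide,
        show (({2}:Finset (Fin 5)) ⊆ {0,2,3}) = True from by decide,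
        show (({2}:Finset (Fin 5)) ⊆ {0,1,2,3}) = True from by decide]
    have cntw2 : cntD (model19 A B C) {0,2,3} = B + C := by
      rw [cnt_model19]
      norm_num [show (({0,2,3}:Finset (Fin 5)) ⊆ {1,2,3,4}) = False from by decide,
        show (({0,2,3}:Finset (Fin 5)) ⊆ {0,1,2,4}) = False from by decide,
        show (({0,2,3}:Finset (Fin 5)) ⊆ {0,2,3}) = True from by decide,
        show (({0,2,3}:Finset (Fin 5)) ⊆ {0,1,2,3}) = True from by decide]
    have cnt3 : cntD (model19 A B C) {3} = 1 + B + C := by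
      rw [cnt_model19]
      norm_num [show (({3}:Finset (Fin 5)) ⊆ {1,2,3,4}) = True from by decide,
        show (({3}:Finset (Fin 5)) ⊆ {0,1,2,4}) = False from by decide,
        show (({3}:Finset (Fin 5)) ⊆ {0,2,3}) = True from by decide,
        show (({3}:Finset (Fin 5)) ⊆ {0,1,2,3}) = True from by decide]
    have cntw3 : cntD (model19 A B C) {0,1,3} = C := by
      rw [cnt_model19]
      norm_num [show (({0,1,3}:Finset (Fin 5)) ⊆ {1,2,3,4}) = False from by decide,
        show (({0,1,3}:Finset (Fin 5)) ⊆ {0,1,2,4}) = False from by decide,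
        show (({0,1,3}:Finset (Fin 5)) ⊆ {0,2,3}) = False from by decide,
        show (({0,1,3}:Finset (Fin 5)) ⊆ {0,1,2,3}) = True from by decide]
    have cnt0 : cntD (model19 A B C) {1,2,3,4} = 1 := by
      rw [cnt_model19]
      norm_num [show (({1,2,3,4}:Finset (Fin 5)) ⊆ {1,2,3,4}) = True from by decide,
        show (({1,2,3,4}:Finset (Fin 5)) ⊆ {0,1,2,4}) = False from by decide,
        show (({1,2,3,4}:Finset (Fin 5)) ⊆ {0,2,3}) = False from by decide,
        show (({1,2,3,4}:Finset (Fin 5)) ⊆ {0,1,2,3}) = False from by decide]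
    have cntw0 : cntD (model19 A B C) {0,1,2,3,4} = 0 := by
      rw [cnt_model19]
      norm_num [show (({0,1,2,3,4}:Finset (Fin 5)) ⊆ {1,2,3,4}) = False from by decide,
        show (({0,1,2,3,4}:Finset (Fin 5)) ⊆ {0,1,2,4}) = False from by decide,
        show (({0,1,2,3,4}:Finset (Fin 5)) ⊆ {0,2,3}) = False from by decide,
        show (({0,1,2,3,4}:Finset (Fin 5)) ⊆ {0,1,2,3}) = False from by decide]
    have h1γ : (0:ℝ) ≤ 1 - γ := by linarith
    -- the three premises hold in the model
    have p1 : satPI γ (model19 A B C) {1} {0,2,4} := by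
      refine Or.inr ?_
      rw [u1, cnt1, cntw1]
      push_cast
      nlinarith [mul_le_mul_of_nonneg_left hC2.le hγ0.le,
        mul_le_mul_of_nonneg_left hA1 h1γ, ia]
    have p2 : satPI γ (model19 A B C) {2} {0,3} := by
      refine Or.inr ?_
      rw [u2, cnt2, cntw2]
      push_cast
      nlinarith [mul_le_mul_of_nonneg_left hA2.le hγ0.le,
        mul_le_mul_of_nonneg_left hB1 h1γ, mul_le_mul_of_nonneg_left hC1 h1γ, ibc]
    have p3 : satPI γ (model19 A B C) {3} {0,1} := by
      refine Or.inr ?_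
      rw [u3, cnt3, cntw3]
      push_cast
      nlinarith [mul_le_mul_of_nonneg_left hB2.le hγ0.le,
        mul_le_mul_of_nonneg_left hC1 h1γ, ic]
    have hsat := hent (model19 A B C) p1 p2 p3
    rcases hsat with h | h
    · rw [cnt0] at h
      exact one_ne_zero h
    · rw [u0, cnt0, cntw0] at h
      push_cast at h
      linarith
  · -- γc ≤ γ → entailment
    intro hγc D h1 h2 h3
    have h1' : γ * (cntD D {1} : ℝ) ≤ (cntD D {0,1,2,4} : ℝ) := by
      rcases h1 with h | h
      · have hle := cntD_le (D := D) (show ({1}:Finset (Fin 5)) ⊆ {0,1,2,4} from by decide)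
        have hz : cntD D {0,1,2,4} = 0 := by omega
        simp [h, hz]
      · rw [u1] at h
        exact h
    have h2' : γ * (cntD D {2} : ℝ) ≤ (cntD D {0,2,3} : ℝ) := by
      rcases h2 with h | h
      · have hle := cntD_le (D := D) (show ({2}:Finset (Fin 5)) ⊆ {0,2,3} from by decide)
        have hz : cntD D {0,2,3} = 0 := by omega
        simp [h, hz]
      · rw [u2] at h
        exact h
    have h3' : γ * (cntD D {3} : ℝ) ≤ (cntD D {0,1,3} : ℝ) := by
      rcases h3 with h | h
      · have hle := cntD_le (D := D) (show ({3}:Finset (Fin 5)) ⊆ {0,1,3} from by decide)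
        have hz : cntD D {0,1,3} = 0 := by omega
        simp [h, hz]
      · rw [u3] at h
        exact h
    have hm := main_ineq19 γc γ hc0 hc1 hkey hγ1 hγc D
    have hq : (0:ℝ) < γ^2 - γ + 1 := by nlinarith [sq_nonneg (γ-1)]
    refine Or.inr ?_
    rw [u0]
    nlinarith [hm, hq,
      mul_nonneg (sq_nonneg γ) (by linarith : (0:ℝ) ≤ (cntD D {0,1,2,4} : ℝ) - γ * cntD D {1}),
      mul_nonneg (mul_nonneg hγ0.le (by linarith : (0:ℝ) ≤ 1 - γ))
        (by linarith : (0:ℝ) ≤ (cntD D {0,2,3} : ℝ) - γ * cntD D {2}),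
      mul_nonneg (sq_nonneg (1-γ)) (by linarith : (0:ℝ) ≤ (cntD D {0,1,3} : ℝ) - γ * cntD D {3})]
end
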